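/- Let p > 2, η ≥ 0, θ ∈ (0,1). Let q ∈ ℝⁿ be a unit vector and Ω a θ-Bernoulli random subset of {1,…,n}. Then E_Ω[(‖q_Ω‖₂² + η²)^{p/2}] ≤ θ(1+η²)^{p/2} + (1−θ)η^p, with equality if and only if q has exactly one nonzero coordinate. -/

import Mathlib

open Real Finset

private lemma rpow_seg_le {p η : ℝ} (hp : 2 < p) (hη : 0 ≤ η) {t : ℝ}
    (ht0 : 0 ≤ t) (ht1 : t ≤ 1) :
    (t + η ^ 2) ^ (p / 2) ≤ (1 - t) * (η ^ 2) ^ (p / 2) + t * (1 + η ^ 2) ^ (p / 2) := by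
  have h1 : (1 : ℝ) < p / 2 := by linarith
  have hcc := (strictConvexOn_rpow h1).convexOn
  have hx : (η ^ 2 : ℝ) ∈ Set.Ici (0 : ℝ) := Set.mem_Ici.mpr (by positivity)
  have hy : (1 + η ^ 2 : ℝ) ∈ Set.Ici (0 : ℝ) := Set.mem_Ici.mpr (by positivity)
  have h := hcc.2 hx hy (by linarith : (0:ℝ) ≤ 1 - t) ht0 (by ring)
  have harg : (1 - t) • (η ^ 2 : ℝ) + t • (1 + η ^ 2) = t + η ^ 2 := by
    simp [smul_eq_mul]; ring
  rw [harg] at h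
  simpa [smul_eq_mul] using h

private lemma rpow_seg_lt {p η : ℝ} (hp : 2 < p) (hη : 0 ≤ η) {t : ℝ}
    (ht0 : 0 < t) (ht1 : t < 1) :
    (t + η ^ 2) ^ (p / 2) < (1 - t) * (η ^ 2) ^ (p / 2) + t * (1 + η ^ 2) ^ (p / 2) := by
  have h1 : (1 : ℝ) < p / 2 := by linarith
  have hcc := strictConvexOn_rpow h1
  have hx : (η ^ 2 : ℝ) ∈ Set.Ici (0 : ℝ) := Set.mem_Ici.mpr (by positivity)
  have hy : (1 + η ^ 2 : ℝ) ∈ Set.Ici (0 : ℝ) := Set.mem_Ici.mpr (by positivity)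
  have hne : (η ^ 2 : ℝ) ≠ 1 + η ^ 2 := by intro h; linarith
  have h := hcc.2 hx hy hne (by linarith : (0:ℝ) < 1 - t) ht0 (by ring)
  have harg : (1 - t) • (η ^ 2 : ℝ) + t • (1 + η ^ 2) = t + η ^ 2 := by
    simp [smul_eq_mul]; ring
  rw [harg] at h
  simpa [smul_eq_mul] using h

/-- Noisy population correctness: for a unit vector `q` and a `θ`-Bernoulli subset `Ω`,
`E_Ω (‖q_Ω‖₂² + η²)^(p/2) ≤ θ(1+η²)^(p/2) + (1−θ)η^p`, with equality iff `q` has exactly one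
nonzero coordinate. -/
theorem noisy_bernoulli_subset_bound (n : ℕ) (p η θ : ℝ) (hp : 2 < p) (hη : 0 ≤ η)
    (hθ : θ ∈ Set.Ioo (0 : ℝ) 1) (q : Fin n → ℝ) (hq : ∑ i, q i ^ 2 = 1) :
    (∑ S ∈ (Finset.univ : Finset (Fin n)).powerset,
        θ ^ S.card * (1 - θ) ^ (n - S.card) *
          ((∑ i ∈ S, q i ^ 2) + η ^ 2) ^ (p / 2)
      ≤ θ * (1 + η ^ 2) ^ (p / 2) + (1 - θ) * η ^ p) ∧
    ((∑ S ∈ (Finset.univ : Finset (Fin n)).powerset,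
        θ ^ S.card * (1 - θ) ^ (n - S.card) *
          ((∑ i ∈ S, q i ^ 2) + η ^ 2) ^ (p / 2)
      = θ * (1 + η ^ 2) ^ (p / 2) + (1 - θ) * η ^ p)
      ↔ ∃! i, q i ≠ 0) := by
  obtain ⟨hθ0, hθ1⟩ := hθ
  have hθ1' : (0:ℝ) < 1 - θ := by linarith
  set w : Finset (Fin n) → ℝ := fun S => θ ^ S.card * (1 - θ) ^ (n - S.card) with hwdef
  set ts : Finset (Fin n) → ℝ := fun S => ∑ i ∈ S, q i ^ 2 with htsdef
  have hwpos : ∀ S, 0 < w S := fun S => mul_pos (pow_pos hθ0 _) (pow_pos hθ1' _)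
  have hA : ((η : ℝ) ^ 2) ^ (p / 2) = η ^ p := by
    rw [← Real.rpow_natCast η 2, ← Real.rpow_mul hη]
    congr 1
    push_cast
    ring
  -- cardinalities
  have hcard : ∀ S ∈ (Finset.univ : Finset (Fin n)).powerset,
      ((Finset.univ : Finset (Fin n)) \ S).card = n - S.card := by
    intro S hS
    rw [Finset.card_sdiff_of_subset (Finset.mem_powerset.mp hS), Finset.card_univ, Fintype.card_fin]
  -- total weight is 1
  have hsum1 : ∑ S ∈ (Finset.univ : Finset (Fin n)).powerset, w S = 1 := by
    have h := Finset.prod_add (fun _ : Fin n => θ) (fun _ : Fin n => 1 - θ)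
      (Finset.univ : Finset (Fin n))
    simp only [Finset.prod_const] at h
    rw [show θ + (1 - θ) = 1 by ring, one_pow] at h
    calc ∑ S ∈ (Finset.univ : Finset (Fin n)).powerset, w S
        = ∑ S ∈ (Finset.univ : Finset (Fin n)).powerset,
            θ ^ S.card * (1 - θ) ^ ((Finset.univ : Finset (Fin n)) \ S).card :=
          Finset.sum_congr rfl fun S hS => by rw [hcard S hS]
      _ = 1 := h.symm
  -- weight of the sets containing a fixed index is θ
  have hmem : ∀ i : Fin n,
      ∑ S ∈ (Finset.univ : Finset (Fin n)).powerset, (if i ∈ S then w S else 0) = θ := by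
    intro i
    have h := Finset.prod_add (fun _ : Fin n => θ) (fun j : Fin n => if j = i then 0 else 1 - θ)
      (Finset.univ : Finset (Fin n))
    have hL : ∏ j ∈ (Finset.univ : Finset (Fin n)),
        (θ + if j = i then 0 else 1 - θ) = θ := by
      rw [Finset.prod_eq_single i]
      · simp
      · intro j _ hj
        rw [if_neg hj]; ring
      · intro h; exact absurd (Finset.mem_univ i) h
    rw [hL] at h
    have hterm : ∀ S ∈ (Finset.univ : Finset (Fin n)).powerset,
        (∏ _j ∈ S, θ) * ∏ j ∈ (Finset.univ : Finset (Fin n)) \ S,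
          (if j = i then (0:ℝ) else 1 - θ) = if i ∈ S then w S else 0 := by
      intro S hS
      by_cases hi : i ∈ S
      · rw [if_pos hi]
        have hcg : ∀ j ∈ (Finset.univ : Finset (Fin n)) \ S,
            (if j = i then (0:ℝ) else 1 - θ) = 1 - θ := by
          intro j hj
          refine if_neg ?_
          rintro rfl
          exact (Finset.mem_sdiff.mp hj).2 hi
        rw [Finset.prod_congr rfl hcg, Finset.prod_const, Finset.prod_const, hcard S hS]
      · rw [if_neg hi]
        have hz0 : (if i = i then (0:ℝ) else 1 - θ) = 0 := if_pos rfl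
        rw [Finset.prod_eq_zero (Finset.mem_sdiff.mpr ⟨Finset.mem_univ i, hi⟩) hz0, mul_zero]
    calc ∑ S ∈ (Finset.univ : Finset (Fin n)).powerset, (if i ∈ S then w S else 0)
        = ∑ S ∈ (Finset.univ : Finset (Fin n)).powerset,
            (∏ _j ∈ S, θ) * ∏ j ∈ (Finset.univ : Finset (Fin n)) \ S,
              (if j = i then (0:ℝ) else 1 - θ) :=
          Finset.sum_congr rfl fun S hS => (hterm S hS).symm
      _ = θ := h.symm
  -- expected mass is θ
  have key2 : ∑ S ∈ (Finset.univ : Finset (Fin n)).powerset, w S * ts S = θ := by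
    have h1 : ∀ S ∈ (Finset.univ : Finset (Fin n)).powerset,
        w S * ts S = ∑ i ∈ (Finset.univ : Finset (Fin n)),
          (if i ∈ S then w S else 0) * q i ^ 2 := by
      intro S hS
      have : ts S = ∑ i ∈ (Finset.univ : Finset (Fin n)), if i ∈ S then q i ^ 2 else 0 := by
        rw [Finset.sum_ite_mem, Finset.univ_inter]
      rw [this, Finset.mul_sum]
      refine Finset.sum_congr rfl fun i _ => ?_
      by_cases hi : i ∈ S <;> simp [hi]
    rw [Finset.sum_congr rfl h1, Finset.sum_comm]
    have h2 : ∀ i ∈ (Finset.univ : Finset (Fin n)),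
        ∑ S ∈ (Finset.univ : Finset (Fin n)).powerset,
          (if i ∈ S then w S else 0) * q i ^ 2 = θ * q i ^ 2 := by
      intro i _
      rw [← Finset.sum_mul, hmem i]
    rw [Finset.sum_congr rfl h2, ← Finset.mul_sum, hq, mul_one]
  -- the linear upper bound sums to the RHS
  have lin : ∑ S ∈ (Finset.univ : Finset (Fin n)).powerset,
      w S * ((1 - ts S) * η ^ p + ts S * (1 + η ^ 2) ^ (p / 2))
      = θ * (1 + η ^ 2) ^ (p / 2) + (1 - θ) * η ^ p := by
    have h : ∀ S, w S * ((1 - ts S) * η ^ p + ts S * (1 + η ^ 2) ^ (p / 2))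
        = η ^ p * w S + ((1 + η ^ 2) ^ (p / 2) - η ^ p) * (w S * ts S) := fun S => by ring
    rw [Finset.sum_congr rfl fun S _ => h S, Finset.sum_add_distrib, ← Finset.mul_sum,
      ← Finset.mul_sum, hsum1, key2]
    ring
  -- bounds on the partial mass
  have hts0 : ∀ S : Finset (Fin n), 0 ≤ ts S :=
    fun S => Finset.sum_nonneg fun i _ => sq_nonneg _
  have hts1 : ∀ S ∈ (Finset.univ : Finset (Fin n)).powerset, ts S ≤ 1 := by
    intro S hS
    rw [← hq]
    exact Finset.sum_le_sum_of_subset_of_nonneg (Finset.mem_powerset.mp hS)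
      fun i _ _ => sq_nonneg _
  -- pointwise inequality
  have hpt : ∀ S ∈ (Finset.univ : Finset (Fin n)).powerset,
      w S * ((ts S + η ^ 2) ^ (p / 2))
        ≤ w S * ((1 - ts S) * η ^ p + ts S * (1 + η ^ 2) ^ (p / 2)) := by
    intro S hS
    refine mul_le_mul_of_nonneg_left ?_ (hwpos S).le
    have := rpow_seg_le hp hη (hts0 S) (hts1 S hS)
    rwa [hA] at this
  have hLHS : ∑ S ∈ (Finset.univ : Finset (Fin n)).powerset,
        θ ^ S.card * (1 - θ) ^ (n - S.card) * ((∑ i ∈ S, q i ^ 2) + η ^ 2) ^ (p / 2)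
      = ∑ S ∈ (Finset.univ : Finset (Fin n)).powerset,
        w S * ((ts S + η ^ 2) ^ (p / 2)) := rfl
  constructor
  · rw [hLHS, ← lin]
    exact Finset.sum_le_sum hpt
  · rw [hLHS, ← lin, Finset.sum_eq_sum_iff_of_le hpt]
    constructor
    · -- equality forces each coordinate to have square 0 or 1
      intro heq
      have hdi : ∀ i : Fin n, q i ^ 2 = 0 ∨ q i ^ 2 = 1 := by
        intro i
        by_contra hcon
        push_neg at hcon
        obtain ⟨h0, h1⟩ := hcon
        have hSi : ({i} : Finset (Fin n)) ∈ (Finset.univ : Finset (Fin n)).powerset :=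
          Finset.mem_powerset.mpr (Finset.subset_univ _)
        have hts : ts {i} = q i ^ 2 := Finset.sum_singleton _ _
        have ht0 : 0 < q i ^ 2 := lt_of_le_of_ne (sq_nonneg _) (Ne.symm h0)
        have ht1 : q i ^ 2 < 1 :=
          lt_of_le_of_ne (by rw [← hts]; exact hts1 _ hSi) h1
        have hlt := rpow_seg_lt hp hη ht0 ht1
        rw [hA] at hlt
        have := heq {i} hSi
        rw [hts] at this
        have hmul := mul_lt_mul_of_pos_left hlt (hwpos {i})
        rw [this] at hmul
        exact lt_irrefl _ hmul
      -- some coordinate is nonzero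
      have hex : ∃ i, q i ≠ 0 := by
        by_contra hall
        push_neg at hall
        rw [Finset.sum_eq_zero (fun i _ => by rw [hall i]; ring)] at hq
        exact one_ne_zero hq.symm
      obtain ⟨i, hi⟩ := hex
      have hi2 : q i ^ 2 = 1 := (hdi i).resolve_left (pow_ne_zero 2 hi)
      refine ⟨i, hi, fun j hj => ?_⟩
      have hj2 : q j ^ 2 = 1 := (hdi j).resolve_left (pow_ne_zero 2 hj)
      by_contra hne
      have hsub : ({j, i} : Finset (Fin n)) ⊆ Finset.univ := Finset.subset_univ _
      have h2 : ∑ k ∈ ({j, i} : Finset (Fin n)), q k ^ 2 ≤ 1 := by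
        rw [← hq]
        exact Finset.sum_le_sum_of_subset_of_nonneg hsub fun k _ _ => sq_nonneg _
      rw [Finset.sum_pair hne, hi2, hj2] at h2
      linarith
    · -- a one-sparse unit vector attains equality
      rintro ⟨i, hi, huniq⟩
      have hz : ∀ j, j ≠ i → q j = 0 := by
        intro j hj
        by_contra hc
        exact hj (huniq j hc)
      have hi2 : q i ^ 2 = 1 := by
        have hsum : ∑ j : Fin n, q j ^ 2 = q i ^ 2 :=
          Finset.sum_eq_single_of_mem i (Finset.mem_univ i)
            (fun j _ hj => by rw [hz j hj]; ring)
        rw [← hq]; exact hsum.symm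
      intro S hS
      by_cases hiS : i ∈ S
      · have hts : ts S = 1 := by
          have hsum : ∑ j ∈ S, q j ^ 2 = q i ^ 2 :=
            Finset.sum_eq_single_of_mem i hiS (fun j _ hj => by rw [hz j hj]; ring)
          show ∑ j ∈ S, q j ^ 2 = 1
          rw [hsum, hi2]
        rw [hts]
        ring_nf
      · have hts : ts S = 0 := by
          show ∑ j ∈ S, q j ^ 2 = 0
          exact Finset.sum_eq_zero fun j hj => by
            rw [hz j (by rintro rfl; exact hiS hj)]; ring
        rw [hts]
        rw [zero_add, sub_zero, zero_mul, add_zero, one_mul, hA]
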